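/- Let r = 3 and let p' ≥ 3 be an odd integer. For every integer n ≥ 0, the following identity holds in A = AddMonoidAlgebra ℤ ℚ: Σ_{λ ∈ Π_{3,n}} Σ_{w ∈ S_3} sign(w)·q^{(p'/4)‖2λ + w•δ‖² + ⟨2λ + w•δ, δ⟩} = (−1)^{n+1} · q^{p'/2 + (p'/2)(n²/3 + n) − n − 2} · Σ_{i=0}^{n} (−1)^i · q^{(p'/2)(i² + i) − i} · (1 − q^{n−i+1})(1 − q^{2i+1})(1 − q^{n+i+2}). -/

import Mathlib

open Finset

noncomputable section

/-- Inner product `⟨u,v⟩ = Σ_i u i * v i` on `ℚ^r`. -/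
def ip {r : ℕ} (u v : Fin r → ℚ) : ℚ := ∑ i, u i * v i

/-- Action of `S_r` permuting coordinates: `(w • v) i = v (w⁻¹ i)`. -/
def pact {r : ℕ} (w : Equiv.Perm (Fin r)) (v : Fin r → ℚ) : Fin r → ℚ := fun i => v (w⁻¹ i)

/-- The Weyl vector `δ`, whose (1-indexed) `i`-th coordinate is `(r+1-2i)/2`. -/
def weylδ (r : ℕ) : Fin r → ℚ := fun j => ((r : ℚ) - 1 - 2 * ((j : ℕ) : ℚ)) / 2

/-- Membership in `V = {v : Fin r → ℚ | Σ_i v i = 0}`. -/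
def memV {r : ℕ} (v : Fin r → ℚ) : Prop := ∑ i, v i = 0

/-- Membership in the root lattice `Q_r`. -/
def memQ {r : ℕ} (v : Fin r → ℚ) : Prop := memV v ∧ ∀ i, ∃ m : ℤ, v i = (m : ℚ)

/-- Membership in the weight lattice `P_r`. -/
def memP {r : ℕ} (v : Fin r → ℚ) : Prop := memV v ∧ ∀ i j, ∃ m : ℤ, v i - v j = (m : ℚ)

/-- The first fundamental weight `Λ₁ = ε₁ - (1/r)(ε₁ + ⋯ + ε_r)`. -/
def Lam1 (r : ℕ) : Fin r → ℚ := fun j => (if (j : ℕ) = 0 then 1 else 0) - 1 / (r : ℚ)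

/-- The simple roots, 0-indexed: `srootF i = ε_{i+1} - ε_{i+2}` in 1-indexed notation. -/
def srootF {r : ℕ} (i : Fin (r - 1)) : Fin r → ℚ :=
  fun j => (if (j : ℕ) = (i : ℕ) then 1 else 0) - (if (j : ℕ) = (i : ℕ) + 1 then 1 else 0)

/-- The highest root `θ = ε₁ - ε_r`. -/
def hroot (r : ℕ) : Fin r → ℚ :=
  fun j => (if (j : ℕ) = 0 then 1 else 0) - (if (j : ℕ) = r - 1 then 1 else 0)

/-- The set `Π_{r,n}` of weights of `L_r(nΛ₁)`:
all `nΛ₁ - a₁α₁ - ⋯ - a_{r-1}α_{r-1}` with `n ≥ a₁ ≥ ⋯ ≥ a_{r-1} ≥ 0`. -/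
def PiWts (r n : ℕ) : Set (Fin r → ℚ) :=
  {v | ∃ a : Fin (r - 1) → ℤ, (∀ i, 0 ≤ a i) ∧ (∀ i, a i ≤ (n : ℤ)) ∧
        (∀ i j, i ≤ j → a j ≤ a i) ∧
        v = (n : ℚ) • Lam1 r - ∑ i, (a i : ℚ) • srootF i}

/-- `Π_{r,n}` as a `Finset`: the (finitely many, multiplicity-one) weights of `L_r(nΛ₁)`. -/
def PiFin (r n : ℕ) : Finset (Fin r → ℚ) :=
  ((Finset.univ : Finset (Fin (r - 1) → Fin (n + 1))).filter
      (fun a => ∀ i j : Fin (r - 1), i ≤ j → ((a j : ℕ) : ℤ) ≤ ((a i : ℕ) : ℤ))).image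
    (fun a => (n : ℚ) • Lam1 r - ∑ i, ((a i : ℕ) : ℚ) • srootF i)

namespace Stmt0Aux

abbrev Aq : Type := AddMonoidAlgebra ℤ ℚ

def φ (e : ℚ) : Aq := AddMonoidAlgebra.single e 1

def vec (N a b : ℚ) : Fin 3 → ℚ := ![2*N/3 - a, a - b - N/3, b - N/3]

def g1 (P N x : ℚ) : ℚ := P/2*(1 + N^2/3 + N + x^2 + x) - N - 2 - x
def gA (P N x : ℚ) : ℚ := g1 P N x + (N - x + 1)
def gAC (P N x : ℚ) : ℚ := g1 P N x + (2*N + 3)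

def E1 (P N a b : ℚ) : ℚ :=
  2 + P/2 - 2*b - b*P + 2*b^2*P - 2*a - a*P - 2*a*b*P + 2*a^2*P + 2*N + N*P - 2*N*a*P + 2/3*N^2*P
def E2 (P N a b : ℚ) : ℚ :=
  1 + P/2 - 2*b + b*P + 2*b^2*P - 2*a - 2*a*P - 2*a*b*P + 2*a^2*P + 2*N + N*P - 2*N*a*P + 2/3*N^2*P
def E3 (P N a b : ℚ) : ℚ :=
  1 + P/2 - 2*b - 2*b*P + 2*b^2*P - 2*a + a*P - 2*a*b*P + 2*a^2*P + 2*N - 2*N*a*P + 2/3*N^2*P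

def Km (P : ℚ) (n m : ℕ) : Aq :=
  ((-1:ℤ)^m) • (φ (g1 P n ((m:ℚ)-(n:ℚ)-1)) + φ (gAC P n ((m:ℚ)-(n:ℚ)-1))
    - φ (gA P n ((m:ℚ)-(n:ℚ)-1)))

lemma vecEq (n : ℕ) (x : Fin (3-1) → Fin (n+1)) :
    (n : ℚ) • Lam1 3 - ∑ i, (((x i : ℕ) : ℚ)) • srootF i
      = vec (n:ℚ) ((x 0 : ℕ) : ℚ) ((x 1 : ℕ) : ℚ) := by
  have h2 : (∑ i, (((x i : ℕ) : ℚ)) • srootF i)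
      = ((x 0 : ℕ) : ℚ) • srootF 0 + ((x 1 : ℕ) : ℚ) • srootF 1 := Fin.sum_univ_two _
  rw [h2]
  funext j
  fin_cases j <;> simp [Lam1, srootF, vec] <;> ring

lemma permUniv : (Finset.univ : Finset (Equiv.Perm (Fin 3))) =
    {1, Equiv.swap 0 1, Equiv.swap 0 2, Equiv.swap 1 2,
     Equiv.swap 0 1 * Equiv.swap 1 2, Equiv.swap 0 2 * Equiv.swap 1 2} := by decide

lemma pact1 : pact (1 : Equiv.Perm (Fin 3)) (weylδ 3) = ![1, 0, -1] := by
  funext i; fin_cases i <;> norm_num [pact, weylδ]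
lemma pact01 : pact (Equiv.swap 0 1) (weylδ 3) = ![0, 1, -1] := by
  funext i; fin_cases i <;> norm_num [pact, weylδ, Equiv.swap_apply_def, Fin.ext_iff]
lemma pact02 : pact (Equiv.swap 0 2) (weylδ 3) = ![-1, 0, 1] := by
  funext i; fin_cases i <;> norm_num [pact, weylδ, Equiv.swap_apply_def, Fin.ext_iff]
lemma pact12 : pact (Equiv.swap 1 2) (weylδ 3) = ![1, -1, 0] := by
  funext i; fin_cases i <;> norm_num [pact, weylδ, Equiv.swap_apply_def, Fin.ext_iff]
lemma pactc : pact (Equiv.swap 0 1 * Equiv.swap 1 2) (weylδ 3) = ![-1, 1, 0] := by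
  funext i; fin_cases i <;>
    norm_num [pact, weylδ, Equiv.swap_apply_def, Fin.ext_iff, mul_inv_rev]
lemma pactd : pact (Equiv.swap 0 2 * Equiv.swap 1 2) (weylδ 3) = ![0, -1, 1] := by
  funext i; fin_cases i <;>
    norm_num [pact, weylδ, Equiv.swap_apply_def, Fin.ext_iff, mul_inv_rev]

lemma wsum (P N a b : ℚ) :
    ∑ w : Equiv.Perm (Fin 3),
      (AddMonoidAlgebra.single
        ((P / 4) * ip ((2 : ℚ) • vec N a b + pact w (weylδ 3))
            ((2 : ℚ) • vec N a b + pact w (weylδ 3))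
          + ip ((2 : ℚ) • vec N a b + pact w (weylδ 3)) (weylδ 3))
        ((Equiv.Perm.sign w : ℤ)) : Aq)
    = φ (E1 P N a b) - φ (E1 P N (a+1) (b+1))
      - (φ (E2 P N a b) - φ (E2 P N (a+1) b))
      - (φ (E3 P N a b) - φ (E3 P N a (b+1))) := by
  rw [permUniv]
  rw [Finset.sum_insert (by decide), Finset.sum_insert (by decide),
      Finset.sum_insert (by decide), Finset.sum_insert (by decide),
      Finset.sum_insert (by decide), Finset.sum_singleton]
  rw [pact1, pact01, pact02, pact12, pactc, pactd]
  rw [show ((Equiv.Perm.sign (1 : Equiv.Perm (Fin 3)) : ℤ)) = 1 from by decide,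
      show ((Equiv.Perm.sign (Equiv.swap (0:Fin 3) 1) : ℤ)) = -1 from by decide,
      show ((Equiv.Perm.sign (Equiv.swap (0:Fin 3) 2) : ℤ)) = -1 from by decide,
      show ((Equiv.Perm.sign (Equiv.swap (1:Fin 3) 2) : ℤ)) = -1 from by decide,
      show ((Equiv.Perm.sign (Equiv.swap (0:Fin 3) 1 * Equiv.swap 1 2) : ℤ)) = 1 from by decide,
      show ((Equiv.Perm.sign (Equiv.swap (0:Fin 3) 2 * Equiv.swap 1 2) : ℤ)) = 1 from by decide]
  simp only [ip, Fin.sum_univ_three, Pi.add_apply, Pi.smul_apply, vec,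
    Matrix.cons_val_zero, Matrix.cons_val_one, Matrix.head_cons, Matrix.cons_val_two,
    Matrix.tail_cons, smul_eq_mul, weylδ]
  norm_num
  simp only [φ, E1, E2, E3]
  ring_nf

def Wf (P N : ℚ) (a b : ℕ) : Aq :=
  φ (E1 P N a b) - φ (E1 P N ((a:ℚ)+1) ((b:ℚ)+1))
    - (φ (E2 P N a b) - φ (E2 P N ((a:ℚ)+1) b))
    - (φ (E3 P N a b) - φ (E3 P N a ((b:ℚ)+1)))

lemma wsum_nat (P N : ℚ) (a b : ℕ) :
    ∑ w : Equiv.Perm (Fin 3),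
      (AddMonoidAlgebra.single
        ((P / 4) * ip ((2 : ℚ) • vec N a b + pact w (weylδ 3))
            ((2 : ℚ) • vec N a b + pact w (weylδ 3))
          + ip ((2 : ℚ) • vec N a b + pact w (weylδ 3)) (weylδ 3))
        ((Equiv.Perm.sign w : ℤ)) : Aq)
    = Wf P N a b := wsum P N a b

section Tele
variable {M : Type*} [AddCommGroup M]

lemma tele_diag (f : ℕ → ℕ → M) (N : ℕ) :
    ∑ a ∈ range N, ∑ b ∈ range (a+1), (f a b - f (a+1) (b+1))
      = ∑ a ∈ range N, f a 0 - ∑ b ∈ range N, f N (b+1) := by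
  have h : ∀ a, ∑ b ∈ range (a+1), (f a b - f (a+1) (b+1))
      = f a 0 + ((∑ b ∈ range a, f a (b+1)) - ∑ b ∈ range (a+1), f (a+1) (b+1)) := by
    intro a
    rw [Finset.sum_sub_distrib, Finset.sum_range_succ' (fun b => f a b) a]
    abel
  simp only [h]
  rw [Finset.sum_add_distrib, Finset.sum_range_sub' (fun a => ∑ b ∈ range a, f a (b+1)) N]
  simp
  abel

lemma tele_col (f : ℕ → ℕ → M) (N : ℕ) :
    ∑ a ∈ range N, ∑ b ∈ range (a+1), (f a b - f (a+1) b)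
      = f 0 0 + ∑ a ∈ range N, f (a+1) (a+1) - ∑ b ∈ range (N+1), f N b := by
  have h : ∀ a, ∑ b ∈ range (a+1), (f a b - f (a+1) b)
      = ((∑ b ∈ range (a+1), f a b) - ∑ b ∈ range (a+1+1), f (a+1) b) + f (a+1) (a+1) := by
    intro a
    rw [Finset.sum_sub_distrib, Finset.sum_range_succ (fun b => f (a+1) b) (a+1)]
    abel
  simp only [h]
  rw [Finset.sum_add_distrib, Finset.sum_range_sub' (fun a => ∑ b ∈ range (a+1), f a b) N]
  simp
  abel

lemma tele_row (f : ℕ → ℕ → M) (N : ℕ) :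
    ∑ a ∈ range N, ∑ b ∈ range (a+1), (f a b - f a (b+1))
      = ∑ a ∈ range N, (f a 0 - f a (a+1)) := by
  apply Finset.sum_congr rfl
  intro a _
  exact Finset.sum_range_sub' (fun b => f a b) (a+1)

lemma pair_sum (f : ℕ → M) (N : ℕ) :
    ∑ m ∈ range (2*N), f m = ∑ a ∈ range N, (f (2*a) + f (2*a+1)) := by
  induction N with
  | zero => simp
  | succ k ih =>
    rw [Finset.sum_range_succ, ← ih, show 2*(k+1) = (2*k+1)+1 by ring,
      Finset.sum_range_succ, Finset.sum_range_succ]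
    abel

lemma split_sum (f : ℕ → M) (N K : ℕ) :
    ∑ m ∈ range (N+K), f m = ∑ m ∈ range N, f m + ∑ i ∈ range K, f (N+i) := by
  induction K with
  | zero => simp
  | succ k ih => rw [show N+(k+1) = (N+k)+1 by ring, Finset.sum_range_succ, ih,
      Finset.sum_range_succ]; abel

lemma reflect_sum (f : ℕ → M) (N : ℕ) :
    ∑ i ∈ range (N+1), f (N-i) = ∑ i ∈ range (N+1), f i := by
  have := Finset.sum_range_reflect f (N+1)
  simpa using this

end Tele

lemma neg_one_pow_two_mul (a : ℕ) : ((-1:ℤ))^(2*a) = 1 := by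
  rw [pow_mul]; norm_num
lemma neg_one_pow_two_mul_add_one (a : ℕ) : ((-1:ℤ))^(2*a+1) = -1 := by
  rw [pow_add, neg_one_pow_two_mul]; norm_num

lemma lhs_pair (P : ℚ) (n a : ℕ) :
    φ (E1 P n a 0) - φ (E1 P n ((n:ℚ)+1) ((a:ℚ)+1))
      - (φ (E2 P n ((a:ℚ)+1) ((a:ℚ)+1)) - φ (E2 P n ((n:ℚ)+1) a))
      - (φ (E3 P n a 0) - φ (E3 P n a ((a:ℚ)+1)))
    = Km P n (2*a) + Km P n (2*a+1)
      + (φ (gA P n (2*(a:ℚ)-(n:ℚ)-1)) - φ (gA P n (2*((a:ℚ)+1)-(n:ℚ)-1))) := by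
  rw [Km, Km, neg_one_pow_two_mul, neg_one_pow_two_mul_add_one, one_smul, neg_smul, one_smul]
  rw [show ((2*a : ℕ) : ℚ) - (n:ℚ) - 1 = 2*(a:ℚ)-(n:ℚ)-1 by push_cast; ring,
      show ((2*a+1 : ℕ) : ℚ) - (n:ℚ) - 1 = 2*(a:ℚ)-(n:ℚ) by push_cast; ring]
  simp only [φ, E1, E2, E3, g1, gA, gAC]
  ring_nf

lemma bracket (P N I : ℚ) :
    (AddMonoidAlgebra.single (P/2 + P/2*(N^2/3 + N) - N - 2) (1:ℤ) : Aq) *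
      ((AddMonoidAlgebra.single (P/2*(I^2 + I) - I) (1:ℤ) : Aq) *
        (1 - (AddMonoidAlgebra.single (N - I + 1) (1:ℤ) : Aq)) *
        (1 - (AddMonoidAlgebra.single (2*I + 1) (1:ℤ) : Aq)) *
        (1 - (AddMonoidAlgebra.single (N + I + 2) (1:ℤ) : Aq)))
    = (φ (g1 P N I) + φ (gAC P N I) - φ (gA P N I))
      - (φ (g1 P N (-(I+1))) + φ (gAC P N (-(I+1))) - φ (gA P N (-(I+1)))) := by
  simp only [φ, g1, gA, gAC, mul_sub, sub_mul, mul_one, one_mul,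
    AddMonoidAlgebra.single_mul_single]
  ring_nf

lemma km_pair (P : ℚ) (n i : ℕ) (hi : i ≤ n) :
    Km P n (n+1+i) + Km P n (n-i)
    = ((-1:ℤ)^(n+1) * (-1)^i) •
        ((φ (g1 P n i) + φ (gAC P n i) - φ (gA P n i))
          - (φ (g1 P n (-((i:ℚ)+1))) + φ (gAC P n (-((i:ℚ)+1))) - φ (gA P n (-((i:ℚ)+1))))) := by
  have hc1 : ((n+1+i : ℕ) : ℚ) - (n:ℚ) - 1 = (i:ℚ) := by push_cast; ring
  have hc2 : ((n-i : ℕ) : ℚ) - (n:ℚ) - 1 = -((i:ℚ)+1) := by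
    rw [Nat.cast_sub hi]; ring
  have hs1 : ((-1:ℤ))^(n+1+i) = (-1)^(n+1) * (-1)^i := by rw [pow_add]
  have hs2 : ((-1:ℤ))^(n-i) = -((-1)^(n+1) * (-1)^i) := by
    have h : n+1+i = (n-i) + 2*i + 1 := by omega
    rw [← hs1, h, pow_add, pow_add, pow_mul]
    simp
  rw [Km, Km, hc1, hc2, hs1, hs2]
  module

end Stmt0Aux

open Stmt0Aux in
theorem stmt0 (p' : ℕ) (hp' : 3 ≤ p') (hodd : Odd p') (n : ℕ) :
    ∑ lam ∈ PiFin 3 n, ∑ w : Equiv.Perm (Fin 3),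
      (AddMonoidAlgebra.single
        (((p' : ℚ) / 4) * ip ((2 : ℚ) • lam + pact w (weylδ 3))
            ((2 : ℚ) • lam + pact w (weylδ 3))
          + ip ((2 : ℚ) • lam + pact w (weylδ 3)) (weylδ 3))
        ((Equiv.Perm.sign w : ℤ)) : AddMonoidAlgebra ℤ ℚ)
    = ((-1 : ℤ) ^ (n + 1)) •
        ((AddMonoidAlgebra.single
            ((p' : ℚ) / 2 + (p' : ℚ) / 2 * ((n : ℚ) ^ 2 / 3 + (n : ℚ)) - (n : ℚ) - 2)
            (1 : ℤ) : AddMonoidAlgebra ℤ ℚ) *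
          ∑ i ∈ Finset.range (n + 1), ((-1 : ℤ) ^ i) •
            ((AddMonoidAlgebra.single
                ((p' : ℚ) / 2 * ((i : ℚ) ^ 2 + (i : ℚ)) - (i : ℚ))
                (1 : ℤ) : AddMonoidAlgebra ℤ ℚ) *
              (1 - (AddMonoidAlgebra.single ((n : ℚ) - (i : ℚ) + 1) (1 : ℤ) :
                      AddMonoidAlgebra ℤ ℚ)) *
              (1 - (AddMonoidAlgebra.single (2 * (i : ℚ) + 1) (1 : ℤ) :
                      AddMonoidAlgebra ℤ ℚ)) *
              (1 - (AddMonoidAlgebra.single ((n : ℚ) + (i : ℚ) + 2) (1 : ℤ) :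
                      AddMonoidAlgebra ℤ ℚ)))) := by
  classical
  set P : ℚ := (p' : ℚ) with hP
  -- Step 1: sum over the image
  rw [PiFin]
  rw [Finset.sum_image (by
    intro x hx y hy h
    dsimp only at h
    rw [vecEq n x, vecEq n y] at h
    have h0 := congrFun h 0
    have h2 := congrFun h 2
    simp only [vec, Matrix.cons_val_zero, Matrix.cons_val_two, Matrix.tail_cons,
      Matrix.head_cons] at h0 h2
    have e0 : ((x 0 : ℕ) : ℚ) = ((y 0 : ℕ) : ℚ) := by linarith
    have e1 : ((x 1 : ℕ) : ℚ) = ((y 1 : ℕ) : ℚ) := by linarith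
    have f0 : x 0 = y 0 := by
      apply Fin.ext; exact_mod_cast e0
    have f1 : x 1 = y 1 := by
      apply Fin.ext; exact_mod_cast e1
    funext k
    fin_cases k
    · exact f0
    · exact f1)]
  -- rewrite each summand
  rw [Finset.sum_congr rfl (fun x _ => by rw [vecEq n x, wsum_nat P n (x 0 : ℕ) (x 1 : ℕ)])]
  -- Step 2: reindex to a sigma finset
  rw [Finset.sum_bij'
    (g := fun (y : (_ : ℕ) × ℕ) => Wf P n y.1 y.2)
    (fun (x : Fin (3-1) → Fin (n+1)) (_ : x ∈ _) => (⟨(x 0 : ℕ), (x 1 : ℕ)⟩ : (_ : ℕ) × ℕ))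
    (fun (y : (_ : ℕ) × ℕ) (hy : y ∈ (range (n+1)).sigma (fun a => range (a+1))) =>
      (show Fin (3-1) → Fin (n+1) from
        ![⟨y.1, by simp only [Finset.mem_sigma, Finset.mem_range] at hy; exact hy.1⟩,
          ⟨y.2, by simp only [Finset.mem_sigma, Finset.mem_range] at hy; omega⟩]))
    (by
      intro x hx
      simp only [Finset.mem_filter, Finset.mem_univ, true_and] at hx
      simp only [Finset.mem_sigma, Finset.mem_range]
      refine ⟨(x 0).isLt, ?_⟩
      have := hx 0 1 (by decide)
      omega)
    (by
      intro y hy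
      simp only [Finset.mem_filter, Finset.mem_univ, true_and]
      intro i j hij
      have hij' : (i : ℕ) ≤ (j : ℕ) := hij
      simp only [Finset.mem_sigma, Finset.mem_range] at hy
      fin_cases i <;> fin_cases j <;> simp_all <;> omega)
    (by
      intro x hx
      funext k
      fin_cases k <;> simp)
    (by
      intro y hy
      rcases y with ⟨y1, y2⟩
      simp)
    (by
      intro x hx
      simp)]
  rw [Finset.sum_sigma]
  -- Step 3: telescope the double sum
  set F1 : ℕ → ℕ → Aq := fun a b => φ (E1 P n a b) with hF1
  set F2 : ℕ → ℕ → Aq := fun a b => φ (E2 P n a b) with hF2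
  set F3 : ℕ → ℕ → Aq := fun a b => φ (E3 P n a b) with hF3
  have hW : ∀ a b : ℕ, Wf P n a b
      = (F1 a b - F1 (a+1) (b+1)) - (F2 a b - F2 (a+1) b) - (F3 a b - F3 a (b+1)) := by
    intro a b
    simp only [Wf, hF1, hF2, hF3]
    push_cast
    ring_nf
  set v : ℕ → Aq := fun a => φ (gA P n (2*(a:ℚ)-(n:ℚ)-1)) with hv
  have hR : ((-1 : ℤ) ^ (n + 1)) •
        ((AddMonoidAlgebra.single (P/2 + P/2*((n:ℚ)^2/3 + (n:ℚ)) - (n:ℚ) - 2) (1:ℤ) : Aq) *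
          ∑ i ∈ range (n + 1), ((-1 : ℤ) ^ i) •
            ((AddMonoidAlgebra.single (P/2*((i:ℚ)^2 + (i:ℚ)) - (i:ℚ)) (1:ℤ) : Aq) *
              (1 - (AddMonoidAlgebra.single ((n:ℚ) - (i:ℚ) + 1) (1:ℤ) : Aq)) *
              (1 - (AddMonoidAlgebra.single (2*(i:ℚ) + 1) (1:ℤ) : Aq)) *
              (1 - (AddMonoidAlgebra.single ((n:ℚ) + (i:ℚ) + 2) (1:ℤ) : Aq))))
      = ∑ a ∈ range (n+1), (Km P n (2*a) + Km P n (2*a+1)) := by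
    have hterm : ∀ i ∈ range (n+1),
        ((-1 : ℤ) ^ (n + 1)) •
          ((AddMonoidAlgebra.single (P/2 + P/2*((n:ℚ)^2/3 + (n:ℚ)) - (n:ℚ) - 2) (1:ℤ) : Aq) *
            (((-1 : ℤ) ^ i) •
              ((AddMonoidAlgebra.single (P/2*((i:ℚ)^2 + (i:ℚ)) - (i:ℚ)) (1:ℤ) : Aq) *
                (1 - (AddMonoidAlgebra.single ((n:ℚ) - (i:ℚ) + 1) (1:ℤ) : Aq)) *
                (1 - (AddMonoidAlgebra.single (2*(i:ℚ) + 1) (1:ℤ) : Aq)) *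
                (1 - (AddMonoidAlgebra.single ((n:ℚ) + (i:ℚ) + 2) (1:ℤ) : Aq)))))
          = Km P n (n+1+i) + Km P n (n-i) := by
      intro i hi
      rw [mul_smul_comm, smul_smul, bracket P (n:ℚ) (i:ℚ)]
      exact (km_pair P n i (Nat.lt_succ_iff.mp (Finset.mem_range.mp hi))).symm
    rw [Finset.mul_sum, Finset.smul_sum]
    rw [Finset.sum_congr rfl hterm]
    rw [Finset.sum_add_distrib]
    rw [show (∑ i ∈ range (n+1), Km P n (n-i)) = ∑ i ∈ range (n+1), Km P n i from
      reflect_sum (Km P n) n]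
    rw [add_comm, ← split_sum (Km P n) (n+1) (n+1),
      show (n+1)+(n+1) = 2*(n+1) by ring, pair_sum (Km P n) (n+1)]
  calc (∑ a ∈ range (n+1), ∑ b ∈ range (a+1), Wf P n a b)
      = ∑ a ∈ range (n+1), ∑ b ∈ range (a+1),
          ((F1 a b - F1 (a+1) (b+1)) - (F2 a b - F2 (a+1) b) - (F3 a b - F3 a (b+1))) := by
        simp only [hW]
    _ = (∑ a ∈ range (n+1), ∑ b ∈ range (a+1), (F1 a b - F1 (a+1) (b+1)))
        - (∑ a ∈ range (n+1), ∑ b ∈ range (a+1), (F2 a b - F2 (a+1) b))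
        - (∑ a ∈ range (n+1), ∑ b ∈ range (a+1), (F3 a b - F3 a (b+1))) := by
        simp only [Finset.sum_sub_distrib]
    _ = (∑ a ∈ range (n+1), F1 a 0 - ∑ b ∈ range (n+1), F1 (n+1) (b+1))
        - (F2 0 0 + ∑ a ∈ range (n+1), F2 (a+1) (a+1) - ∑ b ∈ range (n+1+1), F2 (n+1) b)
        - ∑ a ∈ range (n+1), (F3 a 0 - F3 a (a+1)) := by
        rw [tele_diag F1 (n+1), tele_col F2 (n+1), tele_row F3 (n+1)]
    _ = ∑ a ∈ range (n+1),
          (F1 a 0 - F1 (n+1) (a+1) - (F2 (a+1) (a+1) - F2 (n+1) a) - (F3 a 0 - F3 a (a+1)))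
        + (F2 (n+1) (n+1) - F2 0 0) := by
        rw [Finset.sum_range_succ (fun b => F2 (n+1) b) (n+1)]
        simp only [Finset.sum_sub_distrib, Finset.sum_add_distrib]
        abel
    _ = ∑ a ∈ range (n+1),
          (Km P n (2*a) + Km P n (2*a+1) + (v a - v (a+1)))
        + (F2 (n+1) (n+1) - F2 0 0) := by
        have hpa : ∀ a ∈ range (n+1),
            F1 a 0 - F1 (n+1) (a+1) - (F2 (a+1) (a+1) - F2 (n+1) a) - (F3 a 0 - F3 a (a+1))
              = Km P n (2*a) + Km P n (2*a+1) + (v a - v (a+1)) := by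
          intro a _
          simp only [hF1, hF2, hF3, hv, Km]
          rw [neg_one_pow_two_mul, neg_one_pow_two_mul_add_one, one_smul, neg_smul, one_smul]
          simp only [φ, E1, E2, E3, g1, gA, gAC]
          push_cast
          ring_nf
        rw [Finset.sum_congr rfl hpa]
    _ = ∑ a ∈ range (n+1), (Km P n (2*a) + Km P n (2*a+1)) := by
        rw [Finset.sum_add_distrib, Finset.sum_range_sub' v (n+1)]
        have h1 : v 0 = F2 0 0 := by
          simp only [hv, hF2, φ, E2, gA, g1]
          push_cast
          ring_nf
        have h2 : v (n+1) = F2 (n+1) (n+1) := by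
          simp only [hv, hF2, φ, E2, gA, g1]
          push_cast
          ring_nf
        rw [h1, h2]
        abel
    _ = ((-1 : ℤ) ^ (n + 1)) •
        ((AddMonoidAlgebra.single (P/2 + P/2*((n:ℚ)^2/3 + (n:ℚ)) - (n:ℚ) - 2) (1:ℤ) : Aq) *
          ∑ i ∈ range (n + 1), ((-1 : ℤ) ^ i) •
            ((AddMonoidAlgebra.single (P/2*((i:ℚ)^2 + (i:ℚ)) - (i:ℚ)) (1:ℤ) : Aq) *
              (1 - (AddMonoidAlgebra.single ((n:ℚ) - (i:ℚ) + 1) (1:ℤ) : Aq)) *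
              (1 - (AddMonoidAlgebra.single (2*(i:ℚ) + 1) (1:ℤ) : Aq)) *
              (1 - (AddMonoidAlgebra.single ((n:ℚ) + (i:ℚ) + 2) (1:ℤ) : Aq)))) := hR.symm
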